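/- arXiv:2509.21500 — 7 statements merged into one kernel-verified Lean document; each statement's English description precedes it below -/
import Mathlib

section
/- Theorem 1(i): If f preserves the uniform distribution (Measure.map f U = U), then the KL divergence of the tilted measure from the uniform distribution is KL(π_{f,β} ‖ U) = ((1/β − 1)·e^{1/β} + 1)/(e^{1/β} − 1) − log β − log(e^{1/β} − 1). In particular, this KL divergence depends only on β and not on the choice of uniform-preserving f. -/
open MeasureTheory Real
open scoped NNReal ENNReal

/-- The uniform distribution on `[0,1]`: Lebesgue measure restricted to `[0,1]`. -/
noncomputable def U : Measure ℝ := volume.restrict (Set.Icc 0 1)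

/-- Normalizing constant `Z_{f,β} = ∫₀¹ exp(f(u)/β) du`. -/
noncomputable def Zf (f : ℝ → ℝ) (β : ℝ) : ℝ := ∫ u in Set.Icc (0:ℝ) 1, Real.exp (f u / β)

/-- The RFT-aligned (tilted) reward distribution: density `exp(f(u)/β)/Z_{f,β}` w.r.t. `U`. -/
noncomputable def tilted (f : ℝ → ℝ) (β : ℝ) : Measure ℝ :=
  U.withDensity fun u => ENNReal.ofReal (Real.exp (f u / β) / Zf f β)

/-- Kullback–Leibler divergence `KL(μ ‖ μ₀) = ∫ log (dμ/dμ₀) dμ`. -/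
noncomputable def KLdiv (μ μ₀ : Measure ℝ) : ℝ :=
  ∫ u, Real.log ((μ.rnDeriv μ₀) u).toReal ∂μ

lemma aux_integral (β : ℝ) (hβ : 0 < β) (c1 c2 : ℝ) :
    ∫ x in (0:ℝ)..1, (c1 + c2 * x) * Real.exp (x / β)
      = (c1 * β + c2 * (β - β ^ 2)) * Real.exp (1 / β) - (c1 * β - c2 * β ^ 2) := by
  have key : ∀ x ∈ Set.uIcc (0:ℝ) 1,
      HasDerivAt (fun x => (c1 * β + c2 * (β * x - β ^ 2)) * Real.exp (x / β))
        ((c1 + c2 * x) * Real.exp (x / β)) x := by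
    intro x _
    have h1 : HasDerivAt (fun x : ℝ => c1 * β + c2 * (β * x - β ^ 2)) (c2 * β) x := by
      simpa using ((((hasDerivAt_id x).const_mul β).sub_const (β ^ 2)).const_mul c2).const_add
        (c1 * β)
    have h2 : HasDerivAt (fun x : ℝ => Real.exp (x / β)) (Real.exp (x / β) * (1 / β)) x :=
      ((hasDerivAt_id x).div_const β).exp
    have : HasDerivAt (fun x => (c1 * β + c2 * (β * x - β ^ 2)) * Real.exp (x / β)) _ x :=
      h1.mul h2
    convert this using 1
    have hb := hβ.ne'
    field_simp
    ring
  have hint : IntervalIntegrable (fun x => (c1 + c2 * x) * Real.exp (x / β)) volume 0 1 :=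
    (Continuous.intervalIntegrable (by fun_prop)) _ _
  have := intervalIntegral.integral_eq_sub_of_hasDerivAt key hint
  rw [this]
  simp [Real.exp_zero]
  ring

lemma integral_U_comp (f : ℝ → ℝ) (hf : Measurable f) (hpres : Measure.map f U = U)
    (G : ℝ → ℝ) (hG : Continuous G) :
    ∫ u, G (f u) ∂U = ∫ x in (0:ℝ)..1, G x := by
  have h1 : ∫ u, G (f u) ∂U = ∫ x, G x ∂(Measure.map f U) :=
    (integral_map hf.aemeasurable hG.aestronglyMeasurable).symm
  rw [h1, hpres]
  show ∫ x in Set.Icc (0:ℝ) 1, G x = _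
  rw [integral_Icc_eq_integral_Ioc, ← intervalIntegral.integral_of_le zero_le_one]

/-- Theorem 1(i): for any uniform-preserving misspecification map `f`, the KL divergence of
the tilted measure from `U` depends only on `β`. -/
theorem kl_invariant_of_uniform_preserving
    (β : ℝ) (hβ : 0 < β) (f : ℝ → ℝ) (hf : Measurable f)
    (hmaps : Set.MapsTo f (Set.Icc 0 1) (Set.Icc 0 1))
    (hpres : Measure.map f U = U) :
    KLdiv (tilted f β) U
      = ((1 / β - 1) * Real.exp (1 / β) + 1) / (Real.exp (1 / β) - 1)
        - Real.log β - Real.log (Real.exp (1 / β) - 1) := by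
  set E := Real.exp (1 / β) with hE_def
  have hE : 1 < E := by
    have := Real.add_one_lt_exp (show (1/β : ℝ) ≠ 0 by positivity)
    rw [hE_def]
    have hb : 0 < 1/β := by positivity
    linarith
  have hE1 : (0:ℝ) < E - 1 := by linarith
  -- Z = β (E - 1)
  have hZ : Zf f β = β * (E - 1) := by
    have h0 : Zf f β = ∫ u, Real.exp (f u / β) ∂U := rfl
    have h1 : (∫ u, Real.exp (f u / β) ∂U) = ∫ x in (0:ℝ)..1, Real.exp (x / β) :=
      integral_U_comp f hf hpres (fun x => Real.exp (x / β)) (by fun_prop)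
    have h2 : (∫ x in (0:ℝ)..1, Real.exp (x / β))
        = ∫ x in (0:ℝ)..1, (1 + 0 * x) * Real.exp (x / β) :=
      intervalIntegral.integral_congr fun x _ => by ring
    rw [h0, h1, h2, aux_integral β hβ 1 0]
    ring
  have hZpos : 0 < Zf f β := by rw [hZ]; positivity
  set Z := Zf f β with hZ_def
  -- rnDeriv identification
  have hmeas : Measurable fun u => ENNReal.ofReal (Real.exp (f u / β) / Z) :=
    (((hf.div_const β).exp).div_const Z).ennreal_ofReal
  haveI : SigmaFinite U := by
    show SigmaFinite (volume.restrict (Set.Icc 0 1)); infer_instance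
  have hd : (tilted f β).rnDeriv U =ᵐ[U]
      fun u => ENNReal.ofReal (Real.exp (f u / β) / Z) :=
    Measure.rnDeriv_withDensity U hmeas
  have hac : tilted f β ≪ U := withDensity_absolutelyContinuous U _
  have hd' : (tilted f β).rnDeriv U =ᵐ[tilted f β]
      fun u => ENNReal.ofReal (Real.exp (f u / β) / Z) := hac.ae_le hd
  have step1 : KLdiv (tilted f β) U
      = ∫ u, (f u / β - Real.log Z) ∂(tilted f β) := by
    refine integral_congr_ae (hd'.mono fun u hu => ?_)
    have hx : 0 ≤ Real.exp (f u / β) / Z := by positivity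
    simp only [hu]
    rw [ENNReal.toReal_ofReal hx, Real.log_div (Real.exp_ne_zero _) hZpos.ne',
      Real.log_exp]
  -- integral over tilted measure
  have step2 : ∫ u, (f u / β - Real.log Z) ∂(tilted f β)
      = ∫ u, (Real.exp (f u / β) / Z) * (f u / β - Real.log Z) ∂U := by
    show ∫ u, _ ∂(U.withDensity fun u => ENNReal.ofReal (Real.exp (f u / β) / Z)) = _
    have heq : (fun u => ENNReal.ofReal (Real.exp (f u / β) / Z))
        = fun u => ((Real.toNNReal (Real.exp (f u / β) / Z) : ℝ≥0) : ℝ≥0∞) := rfl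
    rw [heq, integral_withDensity_eq_integral_smul
      (μ := U) (f := fun u => Real.toNNReal (Real.exp (f u / β) / Z)) (by fun_prop)]
    refine integral_congr_ae (Filter.Eventually.of_forall fun u => ?_)
    have hx : 0 ≤ Real.exp (f u / β) / Z := by positivity
    simp [NNReal.smul_def, Real.coe_toNNReal _ hx]
  set c1 : ℝ := -(Real.log Z) / Z with hc1
  set c2 : ℝ := 1 / (β * Z) with hc2
  have step3 : ∫ u, (Real.exp (f u / β) / Z) * (f u / β - Real.log Z) ∂U
      = ∫ x in (0:ℝ)..1, (c1 + c2 * x) * Real.exp (x / β) := by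
    have hptwise : ∀ y : ℝ, (Real.exp (y / β) / Z) * (y / β - Real.log Z)
        = (c1 + c2 * y) * Real.exp (y / β) := by
      intro y; rw [hc1, hc2]; field_simp; ring
    calc ∫ u, (Real.exp (f u / β) / Z) * (f u / β - Real.log Z) ∂U
        = ∫ u, (fun y => (c1 + c2 * y) * Real.exp (y / β)) (f u) ∂U := by
          refine integral_congr_ae (Filter.Eventually.of_forall fun u => ?_)
          exact hptwise (f u)
      _ = ∫ x in (0:ℝ)..1, (c1 + c2 * x) * Real.exp (x / β) :=
          integral_U_comp f hf hpres (fun y => (c1 + c2 * y) * Real.exp (y / β)) (by fun_prop)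
  rw [step1, step2, step3, aux_integral β hβ c1 c2, hc1, hc2, hZ,
    Real.log_mul hβ.ne' hE1.ne', ← hE_def]
  have hb := hβ.ne'
  have he := hE1.ne'
  field_simp
  ring
end

section
/- Theorem 1(ii): If f preserves the uniform distribution and is moreover a bijection of [0,1] with measurable inverse f⁻¹, then the expected gold reward (equivalently, the win rate) of the tilted measure is ∫ u dπ_{f,β}(u) = (∫₀¹ f⁻¹(u) · e^{u/β} du) / (β · (e^{1/β} − 1)). -/
open MeasureTheory Real

/-- Theorem 1(ii): for a bijective uniform-preserving proxy reward `f` with measurable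
inverse `finv`, the expected gold reward (= win rate) of the tilted measure. -/
theorem expected_reward_of_uniform_preserving_bijection
    (β : ℝ) (hβ : 0 < β) (f finv : ℝ → ℝ) (hf : Measurable f) (hfinv : Measurable finv)
    (hmaps : Set.MapsTo f (Set.Icc 0 1) (Set.Icc 0 1))
    (hmaps' : Set.MapsTo finv (Set.Icc 0 1) (Set.Icc 0 1))
    (hleft : ∀ u ∈ Set.Icc (0:ℝ) 1, finv (f u) = u)
    (hright : ∀ u ∈ Set.Icc (0:ℝ) 1, f (finv u) = u)
    (hpres : Measure.map f U = U) :
    ∫ u, u ∂(tilted f β)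
      = (∫ u in Set.Icc (0:ℝ) 1, finv u * Real.exp (u / β))
          / (β * (Real.exp (1 / β) - 1)) := by
  have hexp : ∫ u in Set.Icc (0:ℝ) 1, Real.exp (u / β) = β * (Real.exp (1/β) - 1) := by
    rw [MeasureTheory.integral_Icc_eq_integral_Ioc, ← intervalIntegral.integral_of_le zero_le_one]
    have : ∀ x ∈ Set.uIcc (0:ℝ) 1,
        HasDerivAt (fun u => β * Real.exp (u / β)) (Real.exp (x / β)) x := by
      intro x hx
      have h := ((Real.hasDerivAt_exp (x / β)).comp x
        ((hasDerivAt_id x).div_const β)).const_mul β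
      simpa [mul_comm, mul_div_assoc, ne_of_gt hβ, mul_div_cancel₀] using h
    rw [intervalIntegral.integral_eq_sub_of_hasDerivAt this
      (by apply Continuous.intervalIntegrable; continuity)]
    simp [mul_sub]
  -- Z computation
  have hZ : Zf f β = β * (Real.exp (1/β) - 1) := by
    have : ∫ u, Real.exp (u / β) ∂U = ∫ u, Real.exp (f u / β) ∂U := by
      conv_lhs => rw [← hpres]
      rw [integral_map hf.aemeasurable]
      exact (Measurable.stronglyMeasurable (by measurability)).aestronglyMeasurable
    rw [Zf]
    exact this.symm.trans hexp
  have hZpos : 0 < Zf f β := by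
    rw [hZ]
    have : 1 < Real.exp (1/β) := by
      rw [← Real.exp_zero]
      exact Real.exp_lt_exp.2 (by positivity)
    nlinarith
  -- numerator change of variables
  have hnum : ∫ u in Set.Icc (0:ℝ) 1, finv u * Real.exp (u / β)
      = ∫ u in Set.Icc (0:ℝ) 1, u * Real.exp (f u / β) := by
    have h1 : ∫ u, finv u * Real.exp (u / β) ∂U
        = ∫ u, finv (f u) * Real.exp (f u / β) ∂U := by
      conv_lhs => rw [← hpres]
      rw [integral_map hf.aemeasurable]
      exact (Measurable.stronglyMeasurable (by measurability)).aestronglyMeasurable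
    have h2 : ∫ u, finv (f u) * Real.exp (f u / β) ∂U
        = ∫ u, u * Real.exp (f u / β) ∂U := by
      refine setIntegral_congr_fun measurableSet_Icc fun u hu => ?_
      rw [hleft u hu]
    rw [show (∫ u in Set.Icc (0:ℝ) 1, finv u * Real.exp (u / β)) = ∫ u, finv u * Real.exp (u / β) ∂U from rfl, h1]
    exact h2
  -- compute the tilted integral
  have hdens : Measurable fun u => Real.toNNReal (Real.exp (f u / β) / Zf f β) :=
    ((hf.div_const β).exp.div_const _).real_toNNReal
  have ht : ∫ u, u ∂(tilted f β)
      = ∫ u, (Real.exp (f u / β) / Zf f β) * u ∂U := by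
    rw [show tilted f β = U.withDensity
        (fun u => ((Real.toNNReal (Real.exp (f u / β) / Zf f β) : NNReal) : ENNReal)) from rfl,
      integral_withDensity_eq_integral_smul hdens]
    refine integral_congr_ae (Filter.Eventually.of_forall fun u => ?_)
    show (Real.exp (f u / β) / Zf f β).toNNReal • u = _
    rw [NNReal.smul_def, Real.coe_toNNReal _ (by positivity), smul_eq_mul]
  rw [ht, hnum, ← hZ]
  rw [show (fun u => (Real.exp (f u / β) / Zf f β) * u)
      = fun u => (u * Real.exp (f u / β)) / Zf f β by funext u; ring]
  rw [integral_div]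
  rfl
end

section
/- For 0 < c < 1 and β > 0, the expected gold reward of the tilted measure under the 'top c% wrong' proxy reward f_c equals ∫ u dπ_{f_c,β}(u) = (∫₀^{1−c} u·e^{u/β} du + ∫_{1−c}^{1} (2 − c − u)·e^{u/β} du) / (β·(e^{1/β} − 1)). -/
open MeasureTheory Real

/-- The 'top c% wrong' misspecification map. -/
noncomputable def ftop (c : ℝ) : ℝ → ℝ := fun u => if u ≤ 1 - c then u else 2 - c - u

lemma ftop_measurable (c : ℝ) : Measurable (ftop c) := by
  unfold ftop
  exact Measurable.ite (measurableSet_le measurable_id measurable_const)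
    measurable_id (by fun_prop)

/-- Splitting an integral over `[0,1]` at `1 - c`, rewriting `ftop` on each piece. -/
lemma split_integral (c : ℝ) (hc : 0 < c) (hc1 : c < 1) (g : ℝ → ℝ → ℝ)
    (hg : Continuous fun p : ℝ × ℝ => g p.1 p.2) :
    ∫ u in Set.Icc (0:ℝ) 1, g u (ftop c u)
      = (∫ u in (0:ℝ)..(1 - c), g u u) + ∫ u in (1 - c)..(1:ℝ), g u (2 - c - u) := by
  have h0 : (0:ℝ) ≤ 1 - c := by linarith
  have h1 : (1:ℝ) - c ≤ 1 := by linarith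
  have hg1 : Continuous fun u : ℝ => g u u :=
    hg.comp (continuous_id.prodMk continuous_id)
  have hg2 : Continuous fun u : ℝ => g u (2 - c - u) :=
    hg.comp (continuous_id.prodMk (continuous_const.sub continuous_id))
  have hIoc : ∫ u in Set.Icc (0:ℝ) 1, g u (ftop c u)
      = ∫ u in Set.Ioc (0:ℝ) 1, g u (ftop c u) := by
    rw [Measure.restrict_congr_set MeasureTheory.Ioc_ae_eq_Icc]
  have hint1 : IntervalIntegrable (fun u => g u (ftop c u)) volume 0 (1 - c) := by
    have heq : Set.EqOn (fun u => g u (ftop c u)) (fun u => g u u) (Set.uIcc 0 (1 - c)) := by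
      intro u hu
      rw [Set.uIcc_of_le h0] at hu
      simp only [ftop, if_pos hu.2]
    exact (hg1.intervalIntegrable 0 (1-c)).congr_ae
      (Filter.EventuallyEq.symm ((ae_restrict_iff' measurableSet_uIoc).2
        (Filter.Eventually.of_forall fun u hu => heq (Set.uIoc_subset_uIcc hu))))
  have hint2 : IntervalIntegrable (fun u => g u (ftop c u)) volume (1 - c) 1 := by
    have heq : ∀ u ∈ Set.uIoc (1 - c) 1, g u (ftop c u) = g u (2 - c - u) := by
      intro u hu
      rw [Set.uIoc_of_le h1] at hu
      simp only [ftop, if_neg (not_le.2 hu.1)]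
    exact (hg2.intervalIntegrable (1-c) 1).congr_ae
      (Filter.EventuallyEq.symm ((ae_restrict_iff' measurableSet_uIoc).2
        (Filter.Eventually.of_forall heq)))
  have hsplit : (∫ u in (0:ℝ)..(1 - c), g u (ftop c u))
      + ∫ u in (1 - c)..(1:ℝ), g u (ftop c u) = ∫ u in (0:ℝ)..(1:ℝ), g u (ftop c u) :=
    intervalIntegral.integral_add_adjacent_intervals hint1 hint2
  have e1 : ∫ u in (0:ℝ)..(1 - c), g u (ftop c u) = ∫ u in (0:ℝ)..(1 - c), g u u := by
    apply intervalIntegral.integral_congr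
    intro u hu
    rw [Set.uIcc_of_le h0] at hu
    simp only [ftop, if_pos hu.2]
  have e2 : ∫ u in (1 - c)..(1:ℝ), g u (ftop c u)
      = ∫ u in (1 - c)..(1:ℝ), g u (2 - c - u) := by
    rw [intervalIntegral.integral_of_le h1, intervalIntegral.integral_of_le h1]
    apply setIntegral_congr_fun measurableSet_Ioc
    intro u hu
    simp only [ftop, if_neg (not_le.2 hu.1)]
  rw [hIoc, ← intervalIntegral.integral_of_le (by linarith : (0:ℝ) ≤ 1), ← hsplit, e1, e2]

lemma Zf_ftop (c : ℝ) (hc : 0 < c) (hc1 : c < 1) (β : ℝ) (hβ : 0 < β) :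
    Zf (ftop c) β = β * (Real.exp (1 / β) - 1) := by
  have hβ' : β ≠ 0 := ne_of_gt hβ
  have hcont : Continuous fun u : ℝ => Real.exp (u / β) := by fun_prop
  have hsplit : ∫ u in Set.Icc (0:ℝ) 1, Real.exp (ftop c u / β)
      = (∫ u in (0:ℝ)..(1 - c), Real.exp (u / β))
        + ∫ u in (1 - c)..(1:ℝ), Real.exp ((2 - c - u) / β) :=
    split_integral c hc hc1 (fun _ v => Real.exp (v / β)) (by fun_prop)
  have hsub : ∫ u in (1 - c)..(1:ℝ), Real.exp ((2 - c - u) / β)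
      = ∫ u in (1 - c)..(1:ℝ), Real.exp (u / β) := by
    have h := intervalIntegral.integral_comp_sub_left (a := 1 - c) (b := 1)
      (fun v => Real.exp (v / β)) (2 - c)
    rw [show (2 - c - (1:ℝ)) = 1 - c by ring, show (2 - c - (1 - c) : ℝ) = 1 by ring] at h
    exact h
  have hadd : (∫ u in (0:ℝ)..(1 - c), Real.exp (u / β))
      + ∫ u in (1 - c)..(1:ℝ), Real.exp (u / β) = ∫ u in (0:ℝ)..(1:ℝ), Real.exp (u / β) :=
    intervalIntegral.integral_add_adjacent_intervals
      (hcont.intervalIntegrable 0 (1-c)) (hcont.intervalIntegrable (1-c) 1)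
  have hderiv : ∀ x : ℝ, HasDerivAt (fun u => β * Real.exp (u / β)) (Real.exp (x / β)) x := by
    intro x
    have h := ((Real.hasDerivAt_exp (x / β)).comp x ((hasDerivAt_id x).div_const β))
    have h3 := h.const_mul β
    have h2 : β * (Real.exp (x / β) * (1 / β)) = Real.exp (x / β) := by field_simp
    simpa only [Function.comp, id_eq, h2] using h3
  have hval : ∫ u in (0:ℝ)..(1:ℝ), Real.exp (u / β) = β * (Real.exp (1 / β) - 1) := by
    rw [intervalIntegral.integral_eq_sub_of_hasDerivAt (fun x _ => hderiv x)
      (hcont.intervalIntegrable 0 1)]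
    simp [mul_sub]
  unfold Zf
  rw [hsplit, hsub, hadd, hval]

/-- Expected gold reward of the tilted measure under the 'top c% wrong' proxy reward. -/
theorem expected_reward_top_wrong (c : ℝ) (hc : 0 < c) (hc1 : c < 1) (β : ℝ) (hβ : 0 < β) :
    ∫ u, u ∂(tilted (ftop c) β)
      = ((∫ u in (0:ℝ)..(1 - c), u * Real.exp (u / β))
          + ∫ u in (1 - c)..(1:ℝ), (2 - c - u) * Real.exp (u / β))
        / (β * (Real.exp (1 / β) - 1)) := by
  have hZ : Zf (ftop c) β = β * (Real.exp (1 / β) - 1) := Zf_ftop c hc hc1 β hβ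
  have hZpos : 0 < Zf (ftop c) β := by
    rw [hZ]
    have : (1:ℝ) < Real.exp (1 / β) := by
      rw [← Real.exp_zero]
      exact Real.exp_lt_exp.2 (by positivity)
    nlinarith
  have hmeas : Measurable fun u => (Real.exp (ftop c u / β) / Zf (ftop c) β).toNNReal :=
    (((ftop_measurable c).div_const β).exp.div_const _).real_toNNReal
  have h1 : ∫ u, u ∂(tilted (ftop c) β)
      = ∫ u in Set.Icc (0:ℝ) 1, (Real.exp (ftop c u / β) / Zf (ftop c) β) * u := by
    unfold tilted U
    have hd : (fun u => ENNReal.ofReal (Real.exp (ftop c u / β) / Zf (ftop c) β))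
        = fun u => ((Real.exp (ftop c u / β) / Zf (ftop c) β).toNNReal : ENNReal) := by
      ext u; rfl
    rw [hd, integral_withDensity_eq_integral_smul hmeas]
    apply setIntegral_congr_fun measurableSet_Icc
    intro u _
    simp only [NNReal.smul_def, smul_eq_mul]
    rw [Real.coe_toNNReal]
    positivity
  have h2 : ∫ u in Set.Icc (0:ℝ) 1, (Real.exp (ftop c u / β) / Zf (ftop c) β) * u
      = (∫ u in Set.Icc (0:ℝ) 1, u * Real.exp (ftop c u / β)) / Zf (ftop c) β := by
    rw [← integral_div]
    congr 1; ext u; ring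
  have h3 : ∫ u in Set.Icc (0:ℝ) 1, u * Real.exp (ftop c u / β)
      = (∫ u in (0:ℝ)..(1 - c), u * Real.exp (u / β))
        + ∫ u in (1 - c)..(1:ℝ), u * Real.exp ((2 - c - u) / β) :=
    split_integral c hc hc1 (fun u v => u * Real.exp (v / β)) (by fun_prop)
  have hsub : ∫ u in (1 - c)..(1:ℝ), u * Real.exp ((2 - c - u) / β)
      = ∫ u in (1 - c)..(1:ℝ), (2 - c - u) * Real.exp (u / β) := by
    have h := intervalIntegral.integral_comp_sub_left (a := 1 - c) (b := 1)
      (fun v => (2 - c - v) * Real.exp (v / β)) (2 - c)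
    rw [show (2 - c - (1:ℝ)) = 1 - c by ring, show (2 - c - (1 - c) : ℝ) = 1 by ring] at h
    rw [← h]
    apply intervalIntegral.integral_congr
    intro u _
    simp only
    ring_nf
  rw [h1, h2, h3, hsub, hZ]
end

section
/- The KL divergence of the RFT-aligned policy, D(β) = ((1/β − 1)·e^{1/β} + 1)/(e^{1/β} − 1) − log β − log(e^{1/β} − 1), tends to +∞ as β → 0⁺. -/
open Real Filter

/-- KL divergence of the RFT-aligned policy from the reference policy (Theorem 1(i)). -/
noncomputable def Dkl (β : ℝ) : ℝ :=
  ((1 / β - 1) * Real.exp (1 / β) + 1) / (Real.exp (1 / β) - 1)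
    - Real.log β - Real.log (Real.exp (1 / β) - 1)

lemma Dkl_lower {β : ℝ} (hβ : 0 < β) : -Real.log β - 1 ≤ Dkl β := by
  set x := 1 / β with hx
  have hx0 : 0 < x := by positivity
  have hexp : (1 : ℝ) < Real.exp x := by
    have := Real.exp_lt_exp.mpr hx0
    simpa [Real.exp_zero] using this
  have hden : 0 < Real.exp x - 1 := by linarith
  have hfrac : x - 1 ≤ ((x - 1) * Real.exp x + 1) / (Real.exp x - 1) := by
    rw [le_div_iff₀ hden]
    nlinarith [hx0, hden]
  have hlog : Real.log (Real.exp x - 1) ≤ x := by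
    calc Real.log (Real.exp x - 1) ≤ Real.log (Real.exp x) :=
          Real.log_le_log (by linarith) (by linarith)
      _ = x := Real.log_exp x
  have hlogβ : Real.log β = -Real.log x := by
    rw [hx, Real.log_div one_ne_zero (ne_of_gt hβ), Real.log_one]; ring
  have hxlog : Real.log x ≤ x - 1 := by
    have := Real.log_le_sub_one_of_pos hx0
    linarith
  unfold Dkl
  rw [← hx, hlogβ]
  linarith

/-- The KL divergence tends to `+∞` as `β → 0⁺`. -/
theorem kl_tendsto_atTop : Tendsto Dkl (nhdsWithin 0 (Set.Ioi 0)) atTop := by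
  have h1 : Tendsto (fun β : ℝ => -Real.log β - 1) (nhdsWithin 0 (Set.Ioi 0)) atTop := by
    have h2 : Tendsto (fun β : ℝ => -Real.log β) (nhdsWithin 0 (Set.Ioi 0)) atTop :=
      tendsto_neg_atTop_iff.mpr Real.tendsto_log_nhdsGT_zero
    exact (tendsto_atTop_add_const_right _ (-1) h2).congr (fun β => by ring)
  refine tendsto_atTop_mono' _ ?_ h1
  filter_upwards [self_mem_nhdsWithin] with β hβ
  exact Dkl_lower hβ
end

section
/- The KL divergence of the RFT-aligned policy, D(β) = ((1/β − 1)·e^{1/β} + 1)/(e^{1/β} − 1) − log β − log(e^{1/β} − 1), tends to 0 as β → ∞. -/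
open Real Filter

lemma g_tendsto : Tendsto (fun t : ℝ => (Real.exp t - 1) / t)
    (nhdsWithin 0 (Set.Ioi 0)) (nhds 1) := by
  have h := Real.hasDerivAt_exp 0
  rw [hasDerivAt_iff_tendsto_slope] at h
  have h' := h.mono_left (nhdsWithin_mono _ (by
    intro x hx
    exact ne_of_gt hx))
  rw [Real.exp_zero] at h'
  refine h'.congr (fun t => ?_)
  simp [slope, Real.exp_zero, div_eq_inv_mul]

/-- The KL divergence tends to `0` as `β → ∞`. -/
theorem kl_tendsto_zero : Tendsto Dkl atTop (nhds 0) := by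
  have hg := g_tendsto
  have hexp : Tendsto (fun t : ℝ => Real.exp t) (nhdsWithin 0 (Set.Ioi 0)) (nhds 1) := by
    have h0 : Tendsto (fun t : ℝ => Real.exp t) (nhds 0) (nhds 1) := by
      simpa using Real.continuous_exp.tendsto 0
    exact h0.mono_left nhdsWithin_le_nhds
  have hlog : Tendsto (fun t : ℝ => Real.log ((Real.exp t - 1) / t))
      (nhdsWithin 0 (Set.Ioi 0)) (nhds 0) := by
    have := (Real.continuousAt_log one_ne_zero).tendsto.comp hg
    simpa [Function.comp_def] using this
  have hf : Tendsto (fun t : ℝ =>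
      (Real.exp t - (Real.exp t - 1) / t) / ((Real.exp t - 1) / t)
        - Real.log ((Real.exp t - 1) / t))
      (nhdsWithin 0 (Set.Ioi 0)) (nhds 0) := by
    have h1 := ((hexp.sub hg).div hg one_ne_zero).sub hlog
    simpa using h1
  have hinv : Tendsto (fun β : ℝ => 1 / β) atTop (nhdsWithin 0 (Set.Ioi 0)) := by
    rw [tendsto_nhdsWithin_iff]
    constructor
    · simpa [one_div] using tendsto_inv_atTop_zero (𝕜 := ℝ)
    · filter_upwards [eventually_gt_atTop 0] with β hβ
      exact one_div_pos.mpr hβ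
  have hcomp := hf.comp hinv
  refine hcomp.congr' ?_
  filter_upwards [eventually_gt_atTop (0 : ℝ)] with β hβ
  have ht : (0 : ℝ) < 1 / β := one_div_pos.mpr hβ
  set t := 1 / β with htdef
  have htne : t ≠ 0 := ne_of_gt ht
  have hexpgt : 1 < Real.exp t := by
    rw [show (1 : ℝ) = Real.exp 0 from (Real.exp_zero).symm]
    exact Real.exp_lt_exp.mpr ht
  have hden : Real.exp t - 1 ≠ 0 := ne_of_gt (by linarith)
  have h1 : (Real.exp t - (Real.exp t - 1) / t) / ((Real.exp t - 1) / t)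
      = ((t - 1) * Real.exp t + 1) / (Real.exp t - 1) := by
    field_simp
    ring
  have h2 : Real.log ((Real.exp t - 1) / t) = Real.log (Real.exp t - 1) + Real.log β := by
    rw [Real.log_div hden htne, htdef, one_div, Real.log_inv]
    ring
  simp only [Function.comp]
  rw [h1, h2, Dkl]
  ring
end

section
/- The identity map is the optimal misspecification map: for every β > 0 and every measurable g : [0,1] → [0,1] whose pushforward of U equals U, ∫₀¹ g(u)·e^{u/β} du ≤ ∫₀¹ u·e^{u/β} du. Consequently, among all bijective uniform-preserving proxy rewards f, the win rate (∫₀¹ f⁻¹(u)·e^{u/β} du)/(β(e^{1/β} − 1)) is maximized by f = id. -/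
open MeasureTheory Real

lemma key_tangent (β : ℝ) (hβ : 0 < β) (x y : ℝ) :
    x * Real.exp (y / β) ≤ y * Real.exp (y / β) + β * Real.exp (x / β) - β * Real.exp (y / β) := by
  have hx : Real.exp (x / β) = Real.exp ((x - y) / β) * Real.exp (y / β) := by
    rw [← Real.exp_add]; ring_nf
  have h := Real.add_one_le_exp ((x - y) / β)
  have h3 := (Real.exp_pos (y / β)).le
  have h4 : ((x - y) / β + 1) * Real.exp (y / β) ≤ Real.exp ((x - y) / β) * Real.exp (y / β) :=
    mul_le_mul_of_nonneg_right h h3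
  rw [← hx] at h4
  have h5 : ((x - y) / β + 1) * Real.exp (y / β) * β = (x - y) * Real.exp (y / β) + β * Real.exp (y / β) := by
    field_simp
  nlinarith [mul_le_mul_of_nonneg_right h4 hβ.le]

lemma U_finite : IsFiniteMeasure U := by
  constructor
  simp [U, Measure.restrict_apply_univ, Real.volume_Icc]

/-- The identity map is the optimal misspecification map: every uniform-preserving `g`
satisfies `∫₀¹ g(u)·e^{u/β} du ≤ ∫₀¹ u·e^{u/β} du`; consequently, among bijective
uniform-preserving proxy rewards, the win rate of Theorem 1(ii) is maximized by `f = id`. -/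
theorem identity_is_optimal_misspecification (β : ℝ) (hβ : 0 < β) :
    (∀ g : ℝ → ℝ, Measurable g → Set.MapsTo g (Set.Icc 0 1) (Set.Icc 0 1) →
      Measure.map g U = U →
      (∫ u in Set.Icc (0:ℝ) 1, g u * Real.exp (u / β))
        ≤ ∫ u in Set.Icc (0:ℝ) 1, u * Real.exp (u / β)) ∧
    (∀ f finv : ℝ → ℝ, Measurable f → Measurable finv →
      Set.MapsTo f (Set.Icc 0 1) (Set.Icc 0 1) →
      Set.MapsTo finv (Set.Icc 0 1) (Set.Icc 0 1) →
      (∀ u ∈ Set.Icc (0:ℝ) 1, finv (f u) = u) →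
      (∀ u ∈ Set.Icc (0:ℝ) 1, f (finv u) = u) →
      Measure.map f U = U →
      (∫ u in Set.Icc (0:ℝ) 1, finv u * Real.exp (u / β)) / (β * (Real.exp (1 / β) - 1))
        ≤ (∫ u in Set.Icc (0:ℝ) 1, u * Real.exp (u / β))
            / (β * (Real.exp (1 / β) - 1))) := by
  haveI := U_finite
  have hae : ∀ᵐ u ∂U, u ∈ Set.Icc (0:ℝ) 1 := ae_restrict_mem measurableSet_Icc
  have hbound : ∀ u ∈ Set.Icc (0:ℝ) 1, Real.exp (u / β) ≤ Real.exp (1 / β) := by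
    intro u hu
    exact Real.exp_le_exp.mpr (div_le_div_of_nonneg_right hu.2 hβ.le) |>.trans_eq rfl
  have hmeas_e : Measurable fun u : ℝ => Real.exp (u / β) :=
    (Real.measurable_exp.comp (measurable_id.div_const β))
  -- integrability helper
  have hint : ∀ h : ℝ → ℝ, Measurable h → Set.MapsTo h (Set.Icc 0 1) (Set.Icc 0 1) →
      Integrable (fun u => h u * Real.exp (u / β)) U := by
    intro h hm hmaps
    refine Integrable.mono' (integrable_const (Real.exp (1 / β)))
      ((hm.mul hmeas_e).aestronglyMeasurable) ?_
    filter_upwards [hae] with u hu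
    have h1 := hmaps hu
    rw [Real.norm_eq_abs, abs_of_nonneg (mul_nonneg h1.1 (Real.exp_pos _).le)]
    calc h u * Real.exp (u / β) ≤ 1 * Real.exp (u / β) :=
          mul_le_mul_of_nonneg_right h1.2 (Real.exp_pos _).le
      _ = Real.exp (u / β) := one_mul _
      _ ≤ Real.exp (1 / β) := hbound u hu
  have hint_e : ∀ h : ℝ → ℝ, Measurable h → Set.MapsTo h (Set.Icc 0 1) (Set.Icc 0 1) →
      Integrable (fun u => Real.exp (h u / β)) U := by
    intro h hm hmaps
    refine Integrable.mono' (integrable_const (Real.exp (1 / β)))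
      ((hmeas_e.comp hm).aestronglyMeasurable) ?_
    filter_upwards [hae] with u hu
    rw [Real.norm_eq_abs, abs_of_nonneg (Real.exp_pos _).le]
    exact hbound _ (hmaps hu)
  have hid : Set.MapsTo (id : ℝ → ℝ) (Set.Icc 0 1) (Set.Icc 0 1) := fun u hu => hu
  have main : ∀ g : ℝ → ℝ, Measurable g → Set.MapsTo g (Set.Icc 0 1) (Set.Icc 0 1) →
      Measure.map g U = U →
      (∫ u in Set.Icc (0:ℝ) 1, g u * Real.exp (u / β))
        ≤ ∫ u in Set.Icc (0:ℝ) 1, u * Real.exp (u / β) := by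
    intro g hg hmaps hmap
    have I1 : Integrable (fun u => g u * Real.exp (u / β)) U := hint g hg hmaps
    have I2 : Integrable (fun u => u * Real.exp (u / β)) U := hint id measurable_id hid
    have I3 : Integrable (fun u => Real.exp (g u / β)) U := hint_e g hg hmaps
    have I4 : Integrable (fun u => Real.exp (u / β)) U := hint_e id measurable_id hid
    have heq : ∫ u, Real.exp (g u / β) ∂U = ∫ u, Real.exp (u / β) ∂U := by
      conv_rhs => rw [← hmap]
      rw [integral_map hg.aemeasurable hmeas_e.aestronglyMeasurable]
    show (∫ u, g u * Real.exp (u / β) ∂U) ≤ ∫ u, u * Real.exp (u / β) ∂U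
    have step : (∫ u, g u * Real.exp (u / β) ∂U)
        ≤ ∫ u, (u * Real.exp (u / β) + β * Real.exp (g u / β) - β * Real.exp (u / β)) ∂U := by
      refine integral_mono I1 ?_ (fun u => key_tangent β hβ (g u) u)
      exact ((I2.add (I3.const_mul β)).sub (I4.const_mul β))
    calc (∫ u, g u * Real.exp (u / β) ∂U)
        ≤ ∫ u, (u * Real.exp (u / β) + β * Real.exp (g u / β) - β * Real.exp (u / β)) ∂U := step
      _ = (∫ u, u * Real.exp (u / β) ∂U) + β * (∫ u, Real.exp (g u / β) ∂U)
            - β * ∫ u, Real.exp (u / β) ∂U := by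
          have e1 : ∫ u, (u * Real.exp (u / β) + β * Real.exp (g u / β) - β * Real.exp (u / β)) ∂U
              = (∫ u, (u * Real.exp (u / β) + β * Real.exp (g u / β)) ∂U)
                - ∫ u, β * Real.exp (u / β) ∂U :=
            integral_sub (I2.add (I3.const_mul β)) (I4.const_mul β)
          have e2 : ∫ u, (u * Real.exp (u / β) + β * Real.exp (g u / β)) ∂U
              = (∫ u, u * Real.exp (u / β) ∂U) + ∫ u, β * Real.exp (g u / β) ∂U :=
            integral_add I2 (I3.const_mul β)
          rw [e1, e2, integral_const_mul, integral_const_mul]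
      _ = ∫ u, u * Real.exp (u / β) ∂U := by rw [heq]; ring
  refine ⟨main, ?_⟩
  intro f finv hf hfinv hmf hmfinv hleft _hright hmap
  have hfinv_map : Measure.map finv U = U := by
    conv_lhs => rw [← hmap]
    rw [Measure.map_map hfinv hf]
    have hcongr : finv ∘ f =ᵐ[U] id := by
      filter_upwards [hae] with u hu using hleft u hu
    rw [Measure.map_congr hcongr, Measure.map_id]
  have hnum := main finv hfinv hmfinv hfinv_map
  have hden : 0 < β * (Real.exp (1 / β) - 1) := by
    have : (1:ℝ) < Real.exp (1 / β) := by
      rw [← Real.exp_zero]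
      exact Real.exp_lt_exp.mpr (by positivity)
    nlinarith
  exact div_le_div_of_nonneg_right hnum hden.le
end

section
/- The reversal map is the worst misspecification map: for every β > 0 and every measurable g : [0,1] → [0,1] whose pushforward of U equals U, ∫₀¹ g(u)·e^{u/β} du ≥ ∫₀¹ (1 − u)·e^{u/β} du. Consequently, among all bijective uniform-preserving proxy rewards f, the win rate (∫₀¹ f⁻¹(u)·e^{u/β} du)/(β(e^{1/β} − 1)) is minimized by f(u) = 1 − u. -/
open MeasureTheory Real

/-- Bathtub principle: among subsets of `[0,1]` of measure `c`, the integral of the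
increasing function `exp (u/β)` is minimized by the left interval `[0,c)`. -/
lemma bathtub (β : ℝ) (hβ : 0 < β) {A : Set ℝ} (hA : MeasurableSet A)
    (hsub : A ⊆ Set.Icc 0 1) {c : ℝ}
    (hvol : volume A = ENNReal.ofReal c) :
    ∫⁻ u in Set.Ico 0 c, ENNReal.ofReal (Real.exp (u / β)) ≤
      ∫⁻ u in A, ENNReal.ofReal (Real.exp (u / β)) := by
  set B : Set ℝ := Set.Ico 0 c with hB
  have hBm : MeasurableSet B := measurableSet_Ico
  have hvolB : volume B = ENNReal.ofReal c := by
    rcases le_or_gt c 0 with h | h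
    · rw [hB, Set.Ico_eq_empty (by simpa using h)]
      simp [ENNReal.ofReal_eq_zero.2 h]
    · simp [hB, Real.volume_Ico]
  -- measures of difference pieces are equal
  have hdiff : volume (B \ A) = volume (A \ B) := by
    have h1 : volume (B \ A) + volume (B ∩ A) = volume B := measure_diff_add_inter B hA
    have h2 : volume (A \ B) + volume (A ∩ B) = volume A := measure_diff_add_inter A hBm
    have hint : volume (B ∩ A) = volume (A ∩ B) := by rw [Set.inter_comm]
    have hfin : volume (B ∩ A) ≠ ⊤ :=
      ne_top_of_le_ne_top (by simp [hvolB]) (measure_mono Set.inter_subset_left)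
    refine WithTop.add_right_cancel hfin ?_
    show volume (B \ A) + volume (B ∩ A) = volume (A \ B) + volume (B ∩ A)
    rw [h1, hvolB, ← hvol, ← h2, hint]
  -- compare integrals over the difference pieces
  have hle1 : ∫⁻ u in B \ A, ENNReal.ofReal (Real.exp (u / β)) ≤
      ENNReal.ofReal (Real.exp (c / β)) * volume (B \ A) := by
    calc ∫⁻ u in B \ A, ENNReal.ofReal (Real.exp (u / β))
        ≤ ∫⁻ _ in B \ A, ENNReal.ofReal (Real.exp (c / β)) := by
          refine setLIntegral_mono measurable_const (fun x hx => ?_)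
          have hx' : x ≤ c := le_of_lt hx.1.2
          gcongr
      _ = ENNReal.ofReal (Real.exp (c / β)) * volume (B \ A) := setLIntegral_const _ _
  have hle2 : ENNReal.ofReal (Real.exp (c / β)) * volume (A \ B) ≤
      ∫⁻ u in A \ B, ENNReal.ofReal (Real.exp (u / β)) := by
    calc ENNReal.ofReal (Real.exp (c / β)) * volume (A \ B)
        = ∫⁻ _ in A \ B, ENNReal.ofReal (Real.exp (c / β)) := (setLIntegral_const _ _).symm
      _ ≤ ∫⁻ u in A \ B, ENNReal.ofReal (Real.exp (u / β)) := by
          refine setLIntegral_mono ((measurable_id.div_const β).exp.ennreal_ofReal) (fun x hx => ?_)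
          have hx0 : 0 ≤ x := (hsub hx.1).1
          have hx' : c ≤ x := le_of_not_gt (fun h => hx.2 ⟨hx0, h⟩)
          gcongr
  -- assemble
  have hsplitB : ∫⁻ u in B, ENNReal.ofReal (Real.exp (u / β)) =
      (∫⁻ u in B ∩ A, ENNReal.ofReal (Real.exp (u / β))) +
        ∫⁻ u in B \ A, ENNReal.ofReal (Real.exp (u / β)) := by
    rw [← lintegral_union (hBm.diff hA) (Set.disjoint_sdiff_right.mono_left Set.inter_subset_right),
      Set.inter_union_diff]
  have hsplitA : ∫⁻ u in A, ENNReal.ofReal (Real.exp (u / β)) =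
      (∫⁻ u in A ∩ B, ENNReal.ofReal (Real.exp (u / β))) +
        ∫⁻ u in A \ B, ENNReal.ofReal (Real.exp (u / β)) := by
    rw [← lintegral_union (hA.diff hBm) (Set.disjoint_sdiff_right.mono_left Set.inter_subset_right),
      Set.inter_union_diff]
  calc ∫⁻ u in B, ENNReal.ofReal (Real.exp (u / β))
      = (∫⁻ u in B ∩ A, ENNReal.ofReal (Real.exp (u / β))) +
          ∫⁻ u in B \ A, ENNReal.ofReal (Real.exp (u / β)) := hsplitB
    _ ≤ (∫⁻ u in A ∩ B, ENNReal.ofReal (Real.exp (u / β))) +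
          ENNReal.ofReal (Real.exp (c / β)) * volume (A \ B) := by
        rw [Set.inter_comm, ← hdiff]; exact add_le_add le_rfl hle1
    _ ≤ (∫⁻ u in A ∩ B, ENNReal.ofReal (Real.exp (u / β))) +
          ∫⁻ u in A \ B, ENNReal.ofReal (Real.exp (u / β)) := add_le_add le_rfl hle2
    _ = ∫⁻ u in A, ENNReal.ofReal (Real.exp (u / β)) := hsplitA.symm

lemma key (β : ℝ) (hβ : 0 < β) (g : ℝ → ℝ) (hg : Measurable g)
    (hmapsto : Set.MapsTo g (Set.Icc 0 1) (Set.Icc 0 1))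
    (hpush : Measure.map g U = U) :
    (∫ u in Set.Icc (0:ℝ) 1, (1 - u) * Real.exp (u / β))
      ≤ ∫ u in Set.Icc (0:ℝ) 1, g u * Real.exp (u / β) := by
  have hU : U = volume.restrict (Set.Icc 0 1) := rfl
  set dens : ℝ → ENNReal := fun u => ENNReal.ofReal (Real.exp (u / β)) with hdens_def
  have hdens : Measurable dens := ((measurable_id.div_const β).exp).ennreal_ofReal
  set μβ : Measure ℝ := U.withDensity dens with hμβ
  have hac : μβ ≪ U := withDensity_absolutelyContinuous U dens
  have haeIcc : ∀ᵐ u ∂U, u ∈ Set.Icc (0:ℝ) 1 := by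
    rw [hU]; exact ae_restrict_mem measurableSet_Icc
  have haeIccβ : ∀ᵐ u ∂μβ, u ∈ Set.Icc (0:ℝ) 1 := hac.ae_le haeIcc
  -- Representation of the weighted integrals as lintegrals against μβ
  have rep : ∀ h : ℝ → ℝ, Measurable h → (∀ u ∈ Set.Icc (0:ℝ) 1, 0 ≤ h u) →
      ∫ u in Set.Icc (0:ℝ) 1, h u * Real.exp (u / β) =
        (∫⁻ u, ENNReal.ofReal (h u) ∂μβ).toReal := by
    intro h hm hnn
    have hae : ∀ᵐ u ∂U, 0 ≤ h u := by
      filter_upwards [haeIcc] with u hu using hnn u hu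
    have h1 : (∫ u in Set.Icc (0:ℝ) 1, h u * Real.exp (u / β)) =
        ∫ u, h u * Real.exp (u / β) ∂U := rfl
    rw [h1, integral_eq_lintegral_of_nonneg_ae ?_ ?_]
    · congr 1
      rw [hμβ, lintegral_withDensity_eq_lintegral_mul U hdens hm.ennreal_ofReal]
      refine lintegral_congr_ae ?_
      filter_upwards [hae] with u hu
      simp only [hdens_def, Pi.mul_apply]
      rw [ENNReal.ofReal_mul hu, mul_comm]
    · filter_upwards [hae] with u hu
      exact mul_nonneg hu (Real.exp_pos _).le
    · exact (hm.mul ((measurable_id.div_const β).exp)).aestronglyMeasurable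
  -- the two integrands are nonnegative on [0,1]
  have hnn1 : ∀ u ∈ Set.Icc (0:ℝ) 1, 0 ≤ 1 - u := fun u hu => by linarith [hu.2]
  have hnng : ∀ u ∈ Set.Icc (0:ℝ) 1, 0 ≤ g u := fun u hu => (hmapsto hu).1
  -- layer cake for both
  have lay : ∀ h : ℝ → ℝ, Measurable h → (∀ u ∈ Set.Icc (0:ℝ) 1, 0 ≤ h u) →
      ∫⁻ u, ENNReal.ofReal (h u) ∂μβ = ∫⁻ t in Set.Ioi 0, μβ {a | t < h a} := by
    intro h hm hnn
    refine lintegral_eq_lintegral_meas_lt μβ ?_ hm.aemeasurable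
    filter_upwards [haeIccβ] with u hu using hnn u hu
  -- pointwise comparison of superlevel-set measures
  have comp : ∀ t ∈ Set.Ioi (0:ℝ), μβ {a | t < 1 - a} ≤ μβ {a | t < g a} := by
    intro t ht
    have ht0 : (0:ℝ) < t := ht
    have hm1 : MeasurableSet {a : ℝ | t < 1 - a} := by
      have : {a : ℝ | t < 1 - a} = Set.Iio (1 - t) := by
        ext a; simp only [Set.mem_setOf_eq, Set.mem_Iio]; constructor <;> intro <;> linarith
      rw [this]; exact measurableSet_Iio
    have hmg : MeasurableSet {a : ℝ | t < g a} := measurableSet_lt measurable_const hg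
    rcases le_or_gt 1 t with h1 | h1
    · -- left side is μβ-null
      have hempty : {a : ℝ | t < 1 - a} ∩ Set.Icc 0 1 = ∅ := by
        ext a
        simp only [Set.mem_inter_iff, Set.mem_setOf_eq, Set.mem_Icc, Set.mem_empty_iff_false,
          iff_false, not_and]
        intro h h0
        intro h1'
        linarith
      have hnull : U {a : ℝ | t < 1 - a} = 0 := by
        rw [hU, Measure.restrict_apply hm1, hempty, measure_empty]
      rw [hac hnull]
      exact zero_le
    · rw [hμβ, withDensity_apply _ hm1, withDensity_apply _ hmg, hU,
        Measure.restrict_restrict hm1, Measure.restrict_restrict hmg]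
      have hL : {a : ℝ | t < 1 - a} ∩ Set.Icc 0 1 = Set.Ico 0 (1 - t) := by
        ext a
        simp only [Set.mem_inter_iff, Set.mem_setOf_eq, Set.mem_Icc, Set.mem_Ico]
        constructor
        · rintro ⟨h, h0, h1'⟩; exact ⟨h0, by linarith⟩
        · rintro ⟨h0, h'⟩; exact ⟨by linarith, h0, by linarith⟩
      rw [hL]
      refine bathtub β hβ (hmg.inter measurableSet_Icc) Set.inter_subset_right (c := 1 - t) ?_
      have hvA : volume ({a : ℝ | t < g a} ∩ Set.Icc 0 1) = U {a : ℝ | t < g a} := by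
        rw [hU, Measure.restrict_apply hmg]
      rw [hvA]
      have hmapeq : U {a : ℝ | t < g a} = (Measure.map g U) (Set.Ioi t) := by
        rw [Measure.map_apply hg measurableSet_Ioi]; rfl
      rw [hmapeq, hpush, hU, Measure.restrict_apply measurableSet_Ioi]
      have : Set.Ioi t ∩ Set.Icc (0:ℝ) 1 = Set.Ioc t 1 := by
        ext a
        simp only [Set.mem_inter_iff, Set.mem_Ioi, Set.mem_Icc, Set.mem_Ioc]
        constructor
        · rintro ⟨h, h0, h1'⟩; exact ⟨h, h1'⟩
        · rintro ⟨h, h1'⟩; exact ⟨h, by linarith, h1'⟩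
      rw [this, Real.volume_Ioc]
  -- the superlevel measure function of g is antitone hence measurable
  have hanti : Antitone (fun t : ℝ => μβ {a | t < g a}) := by
    intro s t hst
    exact measure_mono (fun a ha => lt_of_le_of_lt hst ha)
  -- lintegral comparison
  have hlint : ∫⁻ u, ENNReal.ofReal (1 - u) ∂μβ ≤ ∫⁻ u, ENNReal.ofReal (g u) ∂μβ := by
    rw [lay (fun u => 1 - u) (by fun_prop) hnn1, lay g hg hnng]
    exact setLIntegral_mono hanti.measurable comp
  -- finiteness
  have hfin : ∫⁻ u, ENNReal.ofReal (g u) ∂μβ ≠ ⊤ := by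
    have hμβfin : μβ Set.univ ≠ ⊤ := by
      rw [hμβ, withDensity_apply _ MeasurableSet.univ, Measure.restrict_univ]
      refine ne_top_of_le_ne_top ?_
        (lintegral_mono_ae (g := fun _ => ENNReal.ofReal (Real.exp (1 / β))) ?_)
      · rw [lintegral_const, hU, Measure.restrict_apply MeasurableSet.univ, Set.univ_inter,
          Real.volume_Icc]
        exact ENNReal.mul_ne_top ENNReal.ofReal_ne_top ENNReal.ofReal_ne_top
      · filter_upwards [haeIcc] with u hu
        exact ENNReal.ofReal_le_ofReal (Real.exp_le_exp.2 ((div_le_div_iff_of_pos_right hβ).2 hu.2))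
    have : ∫⁻ u, ENNReal.ofReal (g u) ∂μβ ≤ ∫⁻ _, (1 : ENNReal) ∂μβ := by
      refine lintegral_mono_ae ?_
      filter_upwards [haeIccβ] with u hu
      simpa using ENNReal.ofReal_le_ofReal (hmapsto hu).2
    refine ne_top_of_le_ne_top ?_ this
    rw [lintegral_const, one_mul]
    exact hμβfin
  rw [rep (fun u => 1 - u) (by fun_prop) hnn1, rep g hg hnng]
  exact ENNReal.toReal_mono hfin hlint

/-- The reversal map is the worst misspecification map: every uniform-preserving `g`
satisfies `∫₀¹ g(u)·e^{u/β} du ≥ ∫₀¹ (1−u)·e^{u/β} du`; consequently, among bijective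
uniform-preserving proxy rewards, the win rate of Theorem 1(ii) is minimized by
`f(u) = 1 − u`. -/
theorem reversal_is_worst_misspecification (β : ℝ) (hβ : 0 < β) :
    (∀ g : ℝ → ℝ, Measurable g → Set.MapsTo g (Set.Icc 0 1) (Set.Icc 0 1) →
      Measure.map g U = U →
      (∫ u in Set.Icc (0:ℝ) 1, (1 - u) * Real.exp (u / β))
        ≤ ∫ u in Set.Icc (0:ℝ) 1, g u * Real.exp (u / β)) ∧
    (∀ f finv : ℝ → ℝ, Measurable f → Measurable finv →
      Set.MapsTo f (Set.Icc 0 1) (Set.Icc 0 1) →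
      Set.MapsTo finv (Set.Icc 0 1) (Set.Icc 0 1) →
      (∀ u ∈ Set.Icc (0:ℝ) 1, finv (f u) = u) →
      (∀ u ∈ Set.Icc (0:ℝ) 1, f (finv u) = u) →
      Measure.map f U = U →
      (∫ u in Set.Icc (0:ℝ) 1, (1 - u) * Real.exp (u / β))
          / (β * (Real.exp (1 / β) - 1))
        ≤ (∫ u in Set.Icc (0:ℝ) 1, finv u * Real.exp (u / β))
            / (β * (Real.exp (1 / β) - 1))) := by
  constructor
  · exact fun g hg hmap hpush => key β hβ g hg hmap hpush
  · intro f finv hf hfinv hmf hmfinv hleft _hright hpushf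
    -- finv is also uniform-preserving
    have haeIcc : ∀ᵐ u ∂U, u ∈ Set.Icc (0:ℝ) 1 := by
      rw [show U = volume.restrict (Set.Icc 0 1) from rfl]
      exact ae_restrict_mem measurableSet_Icc
    have hcongr : finv ∘ f =ᵐ[U] id := by
      filter_upwards [haeIcc] with u hu using hleft u hu
    have hpushinv : Measure.map finv U = U := by
      conv_lhs => rw [← hpushf]
      rw [Measure.map_map hfinv hf, Measure.map_congr hcongr, Measure.map_id]
    have hkey := key β hβ finv hfinv hmfinv hpushinv
    have hden : (0:ℝ) < β * (Real.exp (1 / β) - 1) := by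
      have : (1:ℝ) < Real.exp (1 / β) := by
        rw [← Real.exp_zero]
        exact Real.exp_lt_exp.2 (by positivity)
      exact mul_pos hβ (by linarith)
    gcongr
end
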